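/- Let ν_s ∈ P(S) be singular with respect to Lebesgue measure (ν_s ⊥ λ) and satisfy I(ν_s) < ∞. Then q(x,·) = δ_x(·) for ν_s-almost every x is the only transition kernel with invariant measure ν_s that attains the infimum defining I(ν_s); consequently I(ν_s) = ∫_S R(δ_x(·) ‖ K(x,·)) ν_s(dx) = ∫_S log(1/r(x)) ν_s(dx). -/

import Mathlib

open MeasureTheory ProbabilityTheory Filter Set Metric
open scoped ENNReal NNReal Topology

noncomputable section

namespace MHLDP

variable {α : Type*}

open Classical in
/-- Relative entropy `R(μ‖ν) = ∫ log (dμ/dν) dμ` if `μ ≪ ν` (and the integral exists),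
`+∞` otherwise. -/
def relEnt [MeasurableSpace α] (μ ν : Measure α) : ℝ≥0∞ :=
  if μ ≪ ν ∧ Integrable (fun x => Real.log ((μ.rnDeriv ν x).toReal)) μ
  then ENNReal.ofReal (∫ x, Real.log ((μ.rnDeriv ν x).toReal) ∂μ)
  else ⊤

variable {d : ℕ} {S : Set (EuclideanSpace ℝ (Fin d))}

/-- Lebesgue measure on (the subtype) `S ⊆ ℝ^d`. -/
def leb (S : Set (EuclideanSpace ℝ (Fin d))) : Measure S :=
  Measure.comap Subtype.val volume

/-- The Hastings ratio `min{1, π(y)J(x|y)/(π(x)J(y|x))}`, set to `1` when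
`π(x)J(y|x) = 0`.  Here `Jd x y` denotes the density `J(y|x)`. -/
def hastingsRatio (πd : S → ℝ) (Jd : S → S → ℝ) (x y : S) : ℝ :=
  if πd x * Jd x y = 0 then 1 else min 1 ((πd y * Jd y x) / (πd x * Jd x y))

/-- The Lebesgue density `a(x,y)` of the acceptance part of the MH kernel. -/
def accDens (πd : S → ℝ) (Jd : S → S → ℝ) (x y : S) : ℝ :=
  hastingsRatio πd Jd x y * Jd x y

/-- The acceptance sub-probability kernel `a(x,dy)`. -/
def acc (πd : S → ℝ) (Jd : S → S → ℝ) (x : S) : Measure S :=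
  (leb S).withDensity (fun y => ENNReal.ofReal (accDens πd Jd x y))

/-- The rejection probability `r(x) = 1 - a(x,S)`. -/
def rej (πd : S → ℝ) (Jd : S → S → ℝ) (x : S) : ℝ :=
  1 - (acc πd Jd x Set.univ).toReal

/-- The Metropolis–Hastings transition kernel `K(x,dy) = a(x,dy) + r(x) δ_x(dy)`. -/
def mhK (πd : S → ℝ) (Jd : S → S → ℝ) (x : S) : Measure S :=
  acc πd Jd x + ENNReal.ofReal (rej πd Jd x) • Measure.dirac x

/-- `μ` is an invariant measure for the transition kernel `q`. -/
def Invariant [MeasurableSpace α] (μ : Measure α) (q : α → Measure α) : Prop :=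
  ∀ A : Set α, MeasurableSet A → μ A = ∫⁻ x, q x A ∂μ

/-- The rate function `I(ν) = inf_q ∫ R(q(x,·) ‖ K(x,·)) ν(dx)`, infimum over Markov
transition kernels `q` with invariant measure `ν`. -/
def rateI [MeasurableSpace α] (K : α → Measure α) (ν : Measure α) : ℝ≥0∞ :=
  ⨅ (q : Kernel α α) (_ : IsMarkovKernel q) (_ : Invariant ν (fun x => q x)),
    ∫⁻ x, relEnt (q x) (K x) ∂ν

/-- The joint measure `(μ ⊗ K)(dx dy) = μ(dx) K(x,dy)` on `S × S`. -/
def prodK [MeasurableSpace α] (μ : Measure α) (K : α → Measure α) : Measure (α × α) :=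
  μ.bind fun x => (K x).map fun y => (x, y)

/-- The rate function `I(μ) = inf_{γ ∈ A(μ)} R(γ ‖ μ ⊗ K)`, infimum over probability
measures on `S × S` with both marginals equal to `μ`. -/
def rateEmp [MeasurableSpace α] (K : α → Measure α) (μ : Measure α) : ℝ≥0∞ :=
  ⨅ (γ : Measure (α × α)) (_ : IsProbabilityMeasure γ)
    (_ : γ.map Prod.fst = μ) (_ : γ.map Prod.snd = μ), relEnt γ (prodK μ K)

/-- Assumptions (A.1) and (A.2): `π` is a probability measure on `S` with continuous
density `πd` w.r.t. Lebesgue measure, equivalent to Lebesgue measure; the proposal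
distributions `J(·|x)` are probability measures with jointly continuous, bounded,
strictly positive density `Jd x · = J(·|x)`, absolutely continuous w.r.t. `π`. -/
structure Assumptions (πd : S → ℝ) (Jd : S → S → ℝ) (π : Measure S) : Prop where
  measS : MeasurableSet S
  prob_pi : IsProbabilityMeasure π
  pi_nonneg : ∀ x, 0 ≤ πd x
  pi_dens : π = (leb S).withDensity (fun x => ENNReal.ofReal (πd x))
  pi_cont : Continuous πd
  pi_ac : π ≪ leb S
  leb_ac : leb S ≪ π
  J_nonneg : ∀ x y, 0 ≤ Jd x y
  J_dens_prob : ∀ x, IsProbabilityMeasure ((leb S).withDensity (fun y => ENNReal.ofReal (Jd x y)))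
  J_ac_pi : ∀ x, (leb S).withDensity (fun y => ENNReal.ofReal (Jd x y)) ≪ π
  J_cont : Continuous (fun p : S × S => Jd p.1 p.2)
  J_bdd : ∃ C : ℝ, ∀ x y, Jd x y ≤ C
  J_pos : ∀ x y, 0 < Jd x y

/-- Assumption (A.3): existence of a Lyapunov function `U` for the kernel `K`. -/
structure Lyapunov (K : S → Measure S) (U : S → ℝ) : Prop where
  nonneg : ∀ x, 0 ≤ U x
  lb : ∃ M : ℝ, ∀ x, (M : EReal) ≤ (U x : EReal)
        - ENNReal.log (∫⁻ y, ENNReal.ofReal (Real.exp (U y)) ∂(K x))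
  cpt : ∀ M : ℝ, IsCompact (closure {x : S | (U x : EReal)
        - ENNReal.log (∫⁻ y, ENNReal.ofReal (Real.exp (U y)) ∂(K x)) ≤ (M : EReal)})
  bdd_on_cpt : ∀ C : Set S, IsCompact C → ∃ B : ℝ, ∀ x ∈ C, U x ≤ B

/-- The law of `(X_0, …, X_n)` for the Markov chain with transition kernel `K`
started at `x`. -/
def chainLaw [MeasurableSpace α] (K : α → Measure α) (x : α) : (n : ℕ) → Measure (Fin (n + 1) → α)
  | 0 => Measure.dirac (fun _ => x)
  | (n + 1) => (chainLaw K x n).bind (fun p => (K (p (Fin.last n))).map (fun y => Fin.snoc p y))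

/-- The empirical measure of a finite path. -/
def empMeas [MeasurableSpace α] {n : ℕ} (p : Fin (n + 1) → α) : Measure α :=
  ((n : ℝ≥0∞) + 1)⁻¹ • ∑ i : Fin (n + 1), Measure.dirac (p i)

lemma empMeas_isProbabilityMeasure [MeasurableSpace α] {n : ℕ} (p : Fin (n + 1) → α) :
    IsProbabilityMeasure (empMeas p) := by
  constructor
  simp only [empMeas, Measure.smul_apply, Measure.finset_sum_apply, measure_univ, smul_eq_mul]
  rw [Finset.sum_const, Finset.card_univ, Fintype.card_fin, nsmul_eq_mul, mul_one]
  rw [show ((n + 1 : ℕ) : ℝ≥0∞) = (n : ℝ≥0∞) + 1 by push_cast; ring]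
  exact ENNReal.inv_mul_cancel (by simp) (by finiteness)

/-- The empirical measure of a finite path, as a probability measure. -/
def empProb [MeasurableSpace α] {n : ℕ} (p : Fin (n + 1) → α) : ProbabilityMeasure α :=
  ⟨empMeas p, empMeas_isProbabilityMeasure p⟩

end MHLDP

namespace MHLDP

variable {α : Type*} {d : ℕ} {S : Set (EuclideanSpace ℝ (Fin d))}

/-- The `k`-step transition probabilities of the kernel `K`. -/
def kIter [MeasurableSpace α] (K : α → Measure α) : ℕ → α → Measure α
  | 0, x => Measure.dirac x
  | (n + 1), x => (kIter K n x).bind K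

/-- Ergodicity of the stationary Markov chain with initial (invariant) distribution `μ` and
transition kernel `q`: every a.s. invariant set is trivial. -/
def KernelErgodic [MeasurableSpace α] (μ : Measure α) (q : α → Measure α) : Prop :=
  Invariant μ q ∧ ∀ A : Set α, MeasurableSet A →
    (∀ᵐ x ∂μ, x ∈ A → q x A = 1) → μ A = 0 ∨ μ A = 1

/-- The set `S₊ = {x ∈ S : π(x) > 0}`. -/
def Splus (πd : S → ℝ) : Set S := {x | 0 < πd x}

/-- The modulus `Δ_ε(x)` of the ball-smoothing construction. -/
def Delta (πd : S → ℝ) (Jd : S → S → ℝ) (ε : ℝ) (x : S) : ℝ :=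
  sSup {t : ℝ | ∀ y z : S, dist y x < t → dist z x < t →
    |Real.log (accDens πd Jd x x) - Real.log (accDens πd Jd y z)| < ε ∧
    |Real.log (rej πd Jd x) - Real.log (rej πd Jd y)| < ε}

/-- The random radius `ϱ^n` of the ball-smoothing construction, given the sample points `Y`. -/
def rad (πd : S → ℝ) (Jd : S → S → ℝ) (n : ℕ) (Y : ℕ → S) : ℝ :=
  sInf ({1 / (n : ℝ)}
    ∪ (Set.range fun i : Fin n => Delta πd Jd (1 / (n : ℝ)) (Y (i : ℕ)))
    ∪ {t : ℝ | ∃ i j : Fin n, Y (i : ℕ) ≠ Y (j : ℕ) ∧ t = dist (Y (i : ℕ)) (Y (j : ℕ)) / 2}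
    ∪ (Set.range fun i : Fin n =>
        Metric.infDist ((Y (i : ℕ) : EuclideanSpace ℝ (Fin d))) (frontier S) / 2)
    ∪ (Set.range fun i : Fin n => accDens πd Jd (Y (i : ℕ)) (Y (i : ℕ))))

/-- The volume `V_n = λ(B_{ϱ^n}(0))`. -/
def Vn (πd : S → ℝ) (Jd : S → S → ℝ) (n : ℕ) (Y : ℕ → S) : ℝ≥0∞ :=
  volume (Metric.ball (0 : EuclideanSpace ℝ (Fin d)) (rad πd Jd n Y))

/-- The smoothed random measure `ν_s^n(dx) = (1/(n V_n)) Σ_{i<n} 1{x ∈ B_{ϱ^n}(Y_i)} λ(dx)`. -/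
def smooth (πd : S → ℝ) (Jd : S → S → ℝ) (n : ℕ) (Y : ℕ → S) : Measure S :=
  ((n : ℝ≥0∞) * Vn πd Jd n Y)⁻¹ •
    (leb S).withDensity (fun x =>
      ∑ i : Fin n, if dist x (Y (i : ℕ)) < rad πd Jd n Y then (1 : ℝ≥0∞) else 0)

end MHLDP

namespace MHLDP

section Aux

variable {d : ℕ} {S : Set (EuclideanSpace ℝ (Fin d))}

lemma sigmaFinite_leb (hS : MeasurableSet S) : SigmaFinite (leb S) := by
  refine Measure.sigmaFinite_of_countable (Set.countable_range
    (fun n : ℕ => (Subtype.val ⁻¹' Metric.ball (0 : EuclideanSpace ℝ (Fin d)) n : Set S)))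
    ?_ ?_
  · rintro s ⟨n, rfl⟩
    have hmeas : MeasurableSet (Subtype.val ⁻¹' Metric.ball (0 : EuclideanSpace ℝ (Fin d)) n
        : Set S) := measurable_subtype_coe measurableSet_ball
    rw [leb, Measure.comap_apply _ Subtype.val_injective
      (fun s hs => (MeasurableEmbedding.subtype_coe hS).measurableSet_image' hs) _ hmeas]
    exact lt_of_le_of_lt (measure_mono (Set.image_preimage_subset _ _)) measure_ball_lt_top
  · ext x
    simp only [Set.sUnion_range, Set.mem_iUnion, Set.mem_preimage, Metric.mem_ball,
      Set.mem_univ, iff_true]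
    obtain ⟨n, hn⟩ := exists_nat_gt (dist (x : EuclideanSpace ℝ (Fin d)) 0)
    exact ⟨n, hn⟩

lemma acc_ac (πd : S → ℝ) (Jd : S → S → ℝ) (x : S) : acc πd Jd x ≪ leb S :=
  withDensity_absolutelyContinuous _ _

lemma hastingsRatio_mem (πd : S → ℝ) (Jd : S → S → ℝ) {π : Measure S}
    (hA : Assumptions πd Jd π) (x y : S) :
    0 ≤ hastingsRatio πd Jd x y ∧ hastingsRatio πd Jd x y ≤ 1 := by
  rw [hastingsRatio]
  split_ifs with h
  · exact ⟨zero_le_one, le_refl 1⟩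
  · constructor
    · refine le_min zero_le_one (div_nonneg (mul_nonneg (hA.pi_nonneg y) (hA.J_nonneg y x)) ?_)
      exact mul_nonneg (hA.pi_nonneg x) (hA.J_nonneg x y)
    · exact min_le_left _ _

lemma accDens_le (πd : S → ℝ) (Jd : S → S → ℝ) {π : Measure S}
    (hA : Assumptions πd Jd π) (x y : S) : accDens πd Jd x y ≤ Jd x y := by
  rw [accDens]
  calc hastingsRatio πd Jd x y * Jd x y ≤ 1 * Jd x y :=
        mul_le_mul_of_nonneg_right (hastingsRatio_mem πd Jd hA x y).2 (hA.J_nonneg x y)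
    _ = Jd x y := one_mul _

lemma acc_univ_le_one (πd : S → ℝ) (Jd : S → S → ℝ) {π : Measure S}
    (hA : Assumptions πd Jd π) (x : S) : acc πd Jd x Set.univ ≤ 1 := by
  have h1 : acc πd Jd x Set.univ ≤
      ((leb S).withDensity (fun y => ENNReal.ofReal (Jd x y))) Set.univ := by
    rw [acc, withDensity_apply _ MeasurableSet.univ, withDensity_apply _ MeasurableSet.univ]
    exact lintegral_mono fun y => ENNReal.ofReal_le_ofReal (accDens_le πd Jd hA x y)
  have h2 := (hA.J_dens_prob x).measure_univ
  rw [h2] at h1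
  exact h1

lemma rej_nonneg (πd : S → ℝ) (Jd : S → S → ℝ) {π : Measure S}
    (hA : Assumptions πd Jd π) (x : S) : 0 ≤ rej πd Jd x := by
  rw [rej, sub_nonneg]
  calc (acc πd Jd x Set.univ).toReal ≤ (1 : ℝ≥0∞).toReal :=
        ENNReal.toReal_mono (by norm_num) (acc_univ_le_one πd Jd hA x)
    _ = 1 := by simp

lemma rej_le_one (πd : S → ℝ) (Jd : S → S → ℝ) (x : S) : rej πd Jd x ≤ 1 := by
  rw [rej]
  have : (0 : ℝ) ≤ (acc πd Jd x Set.univ).toReal := ENNReal.toReal_nonneg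
  linarith

lemma mhK_singleton (πd : S → ℝ) (Jd : S → S → ℝ) {x : S} (hx0 : leb S {x} = 0) :
    mhK πd Jd x {x} = ENNReal.ofReal (rej πd Jd x) := by
  rw [mhK, Measure.add_apply, Measure.smul_apply, acc_ac πd Jd x hx0,
    Measure.dirac_apply_of_mem (Set.mem_singleton x)]
  simp

lemma mhK_null' (hS : MeasurableSet S) (πd : S → ℝ) (Jd : S → S → ℝ) {x : S} {A : Set S}
    (hA : MeasurableSet A) (hx : x ∉ A) (hleb : leb S A = 0) : mhK πd Jd x A = 0 := by
  rw [mhK, Measure.add_apply, Measure.smul_apply, acc_ac πd Jd x hleb,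
    Measure.dirac_apply' x hA, Set.indicator_of_notMem hx]
  simp

lemma isFiniteMeasure_mhK (πd : S → ℝ) (Jd : S → S → ℝ) {π : Measure S}
    (hA : Assumptions πd Jd π) (x : S) : IsFiniteMeasure (mhK πd Jd x) := by
  constructor
  rw [mhK, Measure.add_apply, Measure.smul_apply]
  have h1 := acc_univ_le_one πd Jd hA x
  have h2 : ENNReal.ofReal (rej πd Jd x) * Measure.dirac x Set.univ ≤ 1 := by
    simp only [measure_univ, mul_one]
    exact ENNReal.ofReal_le_one.mpr (rej_le_one πd Jd x)
  calc acc πd Jd x Set.univ + ENNReal.ofReal (rej πd Jd x) * Measure.dirac x Set.univ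
      ≤ 1 + 1 := add_le_add h1 h2
    _ < ⊤ := by norm_num

lemma integrable_dirac' (f : S → ℝ) (x : S) : Integrable f (Measure.dirac x) := by
  constructor
  · refine AEStronglyMeasurable.congr (aestronglyMeasurable_const (b := f x)) ?_
    rw [Filter.EventuallyEq, ae_dirac_eq]
    exact Filter.eventually_pure.mpr rfl
  · rw [HasFiniteIntegral, lintegral_dirac]
    exact ENNReal.coe_lt_top

/-- Value of the relative entropy of `δ_x` against the MH kernel when `r(x) > 0`. -/
lemma relEnt_dirac_of_pos (πd : S → ℝ) (Jd : S → S → ℝ) {π : Measure S}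
    (hA : Assumptions πd Jd π) {x : S} (hx0 : leb S {x} = 0) (hx : 0 < rej πd Jd x) :
    relEnt (Measure.dirac x) (mhK πd Jd x) =
      ENNReal.ofReal (Real.log (1 / rej πd Jd x)) := by
  haveI : IsFiniteMeasure (mhK πd Jd x) := isFiniteMeasure_mhK πd Jd hA x
  set r : ℝ≥0∞ := ENNReal.ofReal (rej πd Jd x) with hr
  have hr0 : r ≠ 0 := by
    simp only [hr, ne_eq, ENNReal.ofReal_eq_zero, not_le]
    exact hx
  have hrt : r ≠ ⊤ := ENNReal.ofReal_ne_top
  set f : S → ℝ≥0∞ := ({x} : Set S).indicator (fun _ => r⁻¹) with hf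
  have hfm : Measurable f := (measurable_const).indicator (measurableSet_singleton x)
  have hkey : Measure.dirac x = (mhK πd Jd x).withDensity f := by
    rw [hf, withDensity_indicator (measurableSet_singleton x), Measure.restrict_singleton,
      mhK_singleton πd Jd hx0, ← hr, withDensity_smul_measure, withDensity_const, smul_smul,
      ENNReal.mul_inv_cancel hr0 hrt, one_smul]
  have hac : Measure.dirac x ≪ mhK πd Jd x := by
    rw [hkey]; exact withDensity_absolutelyContinuous _ _
  have hrn : (Measure.dirac x).rnDeriv (mhK πd Jd x) =ᵐ[mhK πd Jd x] f := by
    rw [hkey]; exact Measure.rnDeriv_withDensity _ hfm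
  have hpt : (Measure.dirac x).rnDeriv (mhK πd Jd x) x = r⁻¹ := by
    by_contra hne
    have hsub : ({x} : Set S) ⊆
        {y | ¬ (Measure.dirac x).rnDeriv (mhK πd Jd x) y = f y} := by
      intro y hy
      rw [Set.mem_singleton_iff] at hy
      simp only [Set.mem_setOf_eq]
      intro h
      apply hne
      rw [hy] at h
      rw [h, hf, Set.indicator_of_mem (Set.mem_singleton x)]
    have h0 : mhK πd Jd x {y | ¬ (Measure.dirac x).rnDeriv (mhK πd Jd x) y = f y} = 0 := hrn
    have := measure_mono_null hsub h0
    rw [mhK_singleton πd Jd hx0, ← hr] at this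
    exact hr0 this
  have hint : Integrable (fun y =>
      Real.log (((Measure.dirac x).rnDeriv (mhK πd Jd x) y).toReal)) (Measure.dirac x) :=
    integrable_dirac' _ x
  rw [relEnt, if_pos ⟨hac, hint⟩, integral_dirac, hpt, ENNReal.toReal_inv, hr,
    ENNReal.toReal_ofReal hx.le, ← one_div]

lemma relEnt_dirac_top (πd : S → ℝ) (Jd : S → S → ℝ) {x : S}
    (hx0 : leb S {x} = 0) (hx : rej πd Jd x = 0) :
    relEnt (Measure.dirac x) (mhK πd Jd x) = ⊤ := by
  rw [relEnt, if_neg]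
  rintro ⟨hac, -⟩
  have h0 : mhK πd Jd x {x} = 0 := by
    rw [mhK_singleton πd Jd hx0, hx]; simp
  have := hac h0
  rw [Measure.dirac_apply_of_mem (Set.mem_singleton x)] at this
  exact one_ne_zero this

lemma measurable_diag : MeasurableSet {p : S × S | p.1 = p.2} := by
  have : {p : S × S | p.1 = p.2} = (fun p : S × S => dist p.1 p.2) ⁻¹' {0} := by
    ext p
    simp [dist_eq_zero]
  rw [this]
  exact (continuous_fst.dist continuous_snd).measurable (measurableSet_singleton 0)

lemma measurable_q_singleton (q : Kernel S S) [IsSFiniteKernel q] :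
    Measurable fun x : S => q x {x} := by
  have h := Kernel.measurable_kernel_prodMk_left (κ := q) (measurable_diag (S := S))
  have heq : (fun x : S => q x {x}) =
      fun x : S => q x (Prod.mk x ⁻¹' {p : S × S | p.1 = p.2}) := by
    funext x
    congr 1
    ext y
    simp [eq_comm]
  rw [heq]
  exact h

lemma measurable_q_diff (q : Kernel S S) [IsSFiniteKernel q] {N : Set S}
    (hN : MeasurableSet N) : Measurable fun x : S => q x (N \ {x}) := by
  have hset : MeasurableSet ((Set.univ ×ˢ N) \ {p : S × S | p.1 = p.2}) :=
    (MeasurableSet.univ.prod hN).diff measurable_diag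
  have h := Kernel.measurable_kernel_prodMk_left (κ := q) hset
  have heq : (fun x : S => q x (N \ {x})) =
      fun x : S => q x (Prod.mk x ⁻¹' ((Set.univ ×ˢ N) \ {p : S × S | p.1 = p.2})) := by
    funext x
    congr 1
    ext y
    simp only [Set.mem_diff, Set.mem_singleton_iff, Set.mem_preimage, Set.mem_prod,
      Set.mem_univ, true_and, Set.mem_setOf_eq]
    tauto
  rw [heq]
  exact h

lemma eq_dirac_of_singleton (μ : Measure S) (hp : IsProbabilityMeasure μ) (x : S)
    (h : μ {x} = 1) : μ = Measure.dirac x := by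
  haveI := hp
  ext A hAm
  have hsplit : μ (A ∩ {x}) + μ (A \ {x}) = μ A := measure_inter_add_diff A
    (measurableSet_singleton x)
  have hdiff : μ (A \ {x}) = 0 := by
    have h1 : μ (A \ {x}) ≤ μ ({x}ᶜ) := measure_mono (Set.diff_subset_iff.mpr (by simp))
    have h2 : μ ({x}ᶜ) = 0 := by
      rw [measure_compl (measurableSet_singleton x) (measure_ne_top μ _), h, measure_univ]
      simp
    exact le_antisymm (h1.trans h2.le) zero_le
  by_cases hxA : x ∈ A
  · have : A ∩ {x} = {x} := by
      ext y; simp only [Set.mem_inter_iff, Set.mem_singleton_iff]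
      exact ⟨fun h => h.2, fun h => ⟨h ▸ hxA, h⟩⟩
    rw [← hsplit, this, h, hdiff, Measure.dirac_apply' x hAm, Set.indicator_of_mem hxA]
    simp
  · have : A ∩ {x} = ∅ := by
      ext y; simp only [Set.mem_inter_iff, Set.mem_singleton_iff, Set.mem_empty_iff_false,
        iff_false, not_and]
      rintro hy rfl; exact hxA hy
    rw [← hsplit, this, Measure.dirac_apply' x hAm, Set.indicator_of_notMem hxA]
    simp [hdiff]

/-- Key lemma: any Markov kernel leaving a singular `ν` invariant with finite entropy
cost is `ν`-a.e. equal to the Dirac kernel. -/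
lemma ae_dirac_of_finite (hS : MeasurableSet S) (πd : S → ℝ) (Jd : S → S → ℝ)
    (νs : Measure S) (hν : IsProbabilityMeasure νs)
    (hsing : Measure.MutuallySingular νs (leb S))
    (q : Kernel S S) (hm : IsMarkovKernel q) (hinv : Invariant νs (fun x => q x))
    (hval : ∫⁻ x, relEnt (q x) (mhK πd Jd x) ∂νs ≠ ⊤) :
    ∀ᵐ x ∂νs, q x = Measure.dirac x := by
  haveI := hν
  haveI := hm
  obtain ⟨t, htm, hνt, hlebtc⟩ := hsing
  set N : Set S := tᶜ with hN
  have hNm : MeasurableSet N := htm.compl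
  have hlebN : leb S N = 0 := hlebtc
  have hνN : νs N = 1 := by
    have h := measure_compl htm (measure_ne_top νs t)
    rw [hN, h, hνt, measure_univ]
    simp
  -- Step 1: a.e. q x (N \ {x}) = 0
  set f : S → ℝ≥0∞ := fun x => q x (N \ {x}) with hf
  have hfm : Measurable f := measurable_q_diff q hNm
  have hpb : ∀ x, (⊤ : ℝ≥0∞) * f x ≤ relEnt (q x) (mhK πd Jd x) := by
    intro x
    by_cases hfx : f x = 0
    · rw [hfx, mul_zero]; exact zero_le
    · have htop : relEnt (q x) (mhK πd Jd x) = ⊤ := by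
        rw [relEnt, if_neg]
        rintro ⟨hac, -⟩
        apply hfx
        apply hac
        exact mhK_null' hS πd Jd (hNm.diff (measurableSet_singleton x))
          (fun h => h.2 rfl) (measure_mono_null Set.diff_subset hlebN)
      rw [htop]
      exact le_top
  have hint0 : ∫⁻ x, f x ∂νs = 0 := by
    by_contra h0
    have : (⊤ : ℝ≥0∞) * ∫⁻ x, f x ∂νs ≤ ∫⁻ x, relEnt (q x) (mhK πd Jd x) ∂νs := by
      rw [← lintegral_const_mul _ hfm]
      exact lintegral_mono hpb
    rw [ENNReal.top_mul h0] at this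
    exact hval (top_le_iff.mp this)
  have hae0 : ∀ᵐ x ∂νs, f x = 0 := (lintegral_eq_zero_iff hfm).mp hint0
  -- Step 2: a.e. q x {x} = 1
  set g : S → ℝ≥0∞ := fun x => q x {x} with hg
  have hgm : Measurable g := measurable_q_singleton q
  have hg_le : ∀ x, g x ≤ 1 := fun x => prob_le_one
  have hint_g : ∫⁻ x, g x ∂νs = 1 := by
    have hub : ∫⁻ x, g x ∂νs ≤ 1 := by
      calc ∫⁻ x, g x ∂νs ≤ ∫⁻ _, 1 ∂νs := lintegral_mono hg_le
        _ = 1 := by simp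
    have hlb : (1 : ℝ≥0∞) ≤ ∫⁻ x, g x ∂νs := by
      have h1 : νs N = ∫⁻ x, q x N ∂νs := hinv N hNm
      have h2 : ∫⁻ x, q x N ∂νs ≤ ∫⁻ x, g x ∂νs := by
        refine lintegral_mono_ae (hae0.mono fun x hx => ?_)
        calc q x N ≤ q x ({x} ∪ (N \ {x})) := measure_mono (fun y hy => by
              by_cases hyx : y = x
              · exact Or.inl hyx
              · exact Or.inr ⟨hy, hyx⟩)
          _ ≤ q x {x} + q x (N \ {x}) := measure_union_le _ _
          _ = g x := by rw [show (q x) (N \ {x}) = 0 from hx, add_zero]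
      rw [← hνN, h1]
      exact h2
    exact le_antisymm hub hlb
  have hg1 : ∀ᵐ x ∂νs, g x = 1 := by
    have hsub : ∫⁻ x, (1 - g x) ∂νs = 0 := by
      rw [lintegral_sub hgm (by rw [hint_g]; exact ENNReal.one_ne_top) (ae_of_all _ hg_le)]
      rw [hint_g]
      simp
    have := (lintegral_eq_zero_iff (measurable_const.sub hgm)).mp hsub
    refine this.mono fun x hx => ?_
    simp only [Pi.zero_apply] at hx
    exact le_antisymm (hg_le x) (tsub_eq_zero_iff_le.mp hx)
  refine hg1.mono fun x hx => ?_
  exact eq_dirac_of_singleton (q x) inferInstance x hx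

lemma invariant_dirac (νs : Measure S) : Invariant νs (fun x => Measure.dirac x) := by
  intro A hAm
  rw [show (∫⁻ x, Measure.dirac x A ∂νs) = ∫⁻ x, A.indicator 1 x ∂νs from
    lintegral_congr fun x => Measure.dirac_apply' x hAm, lintegral_indicator_one hAm]

lemma measurable_rej (hS : MeasurableSet S) (πd : S → ℝ) (Jd : S → S → ℝ) {π : Measure S}
    (hA : Assumptions πd Jd π) : Measurable (rej πd Jd) := by
  haveI : SigmaFinite (leb S) := sigmaFinite_leb hS
  have hu : Continuous fun p : S × S => πd p.1 * Jd p.1 p.2 :=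
    (hA.pi_cont.comp continuous_fst).mul hA.J_cont
  have hv : Continuous fun p : S × S => πd p.2 * Jd p.2 p.1 :=
    (hA.pi_cont.comp continuous_snd).mul (hA.J_cont.comp continuous_swap)
  have hHR : Measurable fun p : S × S => hastingsRatio πd Jd p.1 p.2 := by
    simp only [hastingsRatio]
    exact Measurable.ite (hu.measurable (measurableSet_singleton 0)) measurable_const
      (measurable_const.min (hv.measurable.div hu.measurable))
  have hAD : Measurable fun p : S × S => accDens πd Jd p.1 p.2 := by
    simp only [accDens]
    exact hHR.mul hA.J_cont.measurable
  have hacc : Measurable fun x : S => acc πd Jd x Set.univ := by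
    have heq : ∀ x : S, acc πd Jd x Set.univ =
        ∫⁻ y, ENNReal.ofReal (accDens πd Jd x y) ∂leb S := by
      intro x
      rw [acc, withDensity_apply _ MeasurableSet.univ, Measure.restrict_univ]
    simp only [heq]
    exact Measurable.lintegral_prod_right (ENNReal.measurable_ofReal.comp hAD)
  show Measurable fun x : S => 1 - (acc πd Jd x Set.univ).toReal
  exact measurable_const.sub (ENNReal.measurable_toReal.comp hacc)

end Aux

/-- **Lemma 6.1.** Let `ν_s ⊥ λ` with `I(ν_s) < ∞`. Then `q(x,·) = δ_x(·)` (`ν_s`-a.s.)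
is the only transition kernel with invariant measure `ν_s` attaining the infimum defining
`I(ν_s)`; consequently `I(ν_s) = ∫ R(δ_x ‖ K(x,·)) ν_s(dx) = ∫ log(1/r(x)) ν_s(dx)`. -/
theorem mh_singular_rate_function
    {d : ℕ} {S : Set (EuclideanSpace ℝ (Fin d))}
    (πd : S → ℝ) (Jd : S → S → ℝ) (π : Measure S) (hA : Assumptions πd Jd π)
    (νsing : Measure S) (hν : IsProbabilityMeasure νsing)
    (hsing : Measure.MutuallySingular νsing (leb S))
    (hfin : rateI (mhK πd Jd) νsing ≠ ⊤) :
    Invariant νsing (fun x => Measure.dirac x) ∧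
    rateI (mhK πd Jd) νsing = ∫⁻ x, relEnt (Measure.dirac x) (mhK πd Jd x) ∂νsing ∧
    rateI (mhK πd Jd) νsing =
      ∫⁻ x, ENNReal.ofReal (Real.log (1 / rej πd Jd x)) ∂νsing ∧
    (∀ q : Kernel S S, IsMarkovKernel q → Invariant νsing (fun x => q x) →
      (∫⁻ x, relEnt (q x) (mhK πd Jd x) ∂νsing = rateI (mhK πd Jd) νsing) →
      ∀ᵐ x ∂νsing, q x = Measure.dirac x) := by
  haveI := hν
  have hS : MeasurableSet S := hA.measS
  -- Claim 1: invariance of the Dirac kernel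
  have hinvd : Invariant νsing (fun x => Measure.dirac x) := invariant_dirac νsing
  -- Claim 4 core: any optimal (finite-value) kernel is a.e. Dirac
  have hkey : ∀ q : Kernel S S, IsMarkovKernel q → Invariant νsing (fun x => q x) →
      (∫⁻ x, relEnt (q x) (mhK πd Jd x) ∂νsing ≠ ⊤) →
      ∀ᵐ x ∂νsing, q x = Measure.dirac x := fun q hm hinv hval =>
    ae_dirac_of_finite hS πd Jd νsing hν hsing q hm hinv hval
  -- Claim 2
  have hinv_id : Invariant νsing (fun x => (Kernel.id : Kernel S S) x) := by
    intro A hAm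
    simp only [Kernel.id_apply]
    exact hinvd A hAm
  have hval_id : ∫⁻ x, relEnt ((Kernel.id : Kernel S S) x) (mhK πd Jd x) ∂νsing =
      ∫⁻ x, relEnt (Measure.dirac x) (mhK πd Jd x) ∂νsing :=
    lintegral_congr fun x => by rw [Kernel.id_apply]
  have h2 : rateI (mhK πd Jd) νsing =
      ∫⁻ x, relEnt (Measure.dirac x) (mhK πd Jd x) ∂νsing := by
    apply le_antisymm
    · refine iInf_le_of_le Kernel.id ?_
      refine iInf_le_of_le inferInstance ?_
      refine iInf_le_of_le hinv_id ?_
      exact le_of_eq hval_id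
    · refine le_iInf fun q => le_iInf fun hm => le_iInf fun hinv => ?_
      by_cases hv : ∫⁻ x, relEnt (q x) (mhK πd Jd x) ∂νsing = ⊤
      · rw [hv]; exact le_top
      · have hd := hkey q hm hinv hv
        refine le_of_eq (lintegral_congr_ae (hd.mono fun x hx => ?_)).symm
        rw [hx]
  refine ⟨hinvd, h2, ?_, ?_⟩
  · -- Claim 3
    have hfin2 : ∫⁻ x, relEnt (Measure.dirac x) (mhK πd Jd x) ∂νsing ≠ ⊤ := by
      rw [← h2]; exact hfin
    have hrejm : Measurable (rej πd Jd) := measurable_rej hS πd Jd hA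
    have hsetm : MeasurableSet {x : S | rej πd Jd x ≤ 0} :=
      hrejm measurableSet_Iic
    -- a.e. x, the singleton {x} is Lebesgue-null
    obtain ⟨t, htm, hνt, hlebtc⟩ := hsing
    have hlebx : ∀ᵐ x ∂νsing, leb S {x} = 0 := by
      rw [ae_iff]
      refine measure_mono_null (fun x hx => ?_) hνt
      by_contra hxt
      exact hx (measure_mono_null (Set.singleton_subset_iff.mpr hxt) hlebtc)
    have hpb : ∀ᵐ x ∂νsing, ({x : S | rej πd Jd x ≤ 0}.indicator (fun _ => (⊤ : ℝ≥0∞))) x ≤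
        relEnt (Measure.dirac x) (mhK πd Jd x) := by
      refine hlebx.mono fun x hx0 => ?_
      by_cases hx : x ∈ {x : S | rej πd Jd x ≤ 0}
      · rw [Set.indicator_of_mem hx]
        have hxr : rej πd Jd x = 0 := le_antisymm hx (rej_nonneg πd Jd hA x)
        rw [relEnt_dirac_top πd Jd hx0 hxr]
      · rw [Set.indicator_of_notMem hx]
        exact zero_le
    have hnull : νsing {x : S | rej πd Jd x ≤ 0} = 0 := by
      by_contra h0
      have hle : ∫⁻ x, ({x : S | rej πd Jd x ≤ 0}.indicator (fun _ => (⊤ : ℝ≥0∞))) x ∂νsing ≤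
          ∫⁻ x, relEnt (Measure.dirac x) (mhK πd Jd x) ∂νsing := lintegral_mono_ae hpb
      rw [lintegral_indicator_const hsetm, ENNReal.top_mul h0] at hle
      exact hfin2 (top_le_iff.mp hle)
    have hrpos : ∀ᵐ x ∂νsing, 0 < rej πd Jd x := by
      rw [ae_iff]
      convert hnull using 2
      ext x
      simp [not_lt]
    rw [h2]
    refine lintegral_congr_ae ((hrpos.and hlebx).mono fun x hx => ?_)
    exact relEnt_dirac_of_pos πd Jd hA hx.2 hx.1
  · -- Claim 4
    intro q hm hinv heq
    refine hkey q hm hinv ?_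
    rw [heq]
    exact hfin

end MHLDP
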